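/- Let m, n be positive integers such that for every prime p, p divides m if and only if p divides n (m and n have the same prime divisors). Let (a₁,a₂) be a point on T_{m,n} with gcd(a₁,a₂) = 1. Then there is exactly one line on T_{m,n} containing both the origin and (a₁,a₂). -/

import Mathlib

/-- A line on the discrete torus `ZMod m × ZMod n`: the image of an integer line
`{A + k•(u,v) : k ∈ ℤ}` with `gcd(u,v) = 1`. -/
def torusLine (m n : ℕ) (L : Set (ZMod m × ZMod n)) : Prop :=
  ∃ (A : ZMod m × ZMod n) (u v : ℤ), Int.gcd u v = 1 ∧
    L = {P | ∃ k : ℤ, P = (A.1 + ((k * u : ℤ) : ZMod m), A.2 + ((k * v : ℤ) : ZMod n))}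

/-- Three points of the torus are collinear if some line contains all three. -/
def torusCollinear (m n : ℕ) (P Q R : ZMod m × ZMod n) : Prop :=
  ∃ L, torusLine m n L ∧ P ∈ L ∧ Q ∈ L ∧ R ∈ L

/-- No three (distinct) points of `S` lie on a common line. -/
def noThreeInLine (m n : ℕ) (S : Set (ZMod m × ZMod n)) : Prop :=
  ∀ P ∈ S, ∀ Q ∈ S, ∀ R ∈ S, P ≠ Q → P ≠ R → Q ≠ R → ¬ torusCollinear m n P Q R

/-- `tau m n`: maximal number of points on the torus with no three collinear. -/
noncomputable def tau (m n : ℕ) : ℕ :=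
  sSup {k | ∃ S : Finset (ZMod m × ZMod n), noThreeInLine m n ↑S ∧ S.card = k}

theorem stmt12 (m n : ℕ) (hm : 0 < m) (hn : 0 < n)
    (hpr : ∀ p : ℕ, p.Prime → (p ∣ m ↔ p ∣ n))
    (a₁ a₂ : ℤ) (ha : Int.gcd a₁ a₂ = 1) :
    ∃! L : Set (ZMod m × ZMod n), torusLine m n L ∧
      (0 : ZMod m × ZMod n) ∈ L ∧ ((a₁ : ZMod m), (a₂ : ZMod n)) ∈ L := by
  refine ⟨{P | ∃ k : ℤ, P = (((k * a₁ : ℤ) : ZMod m), ((k * a₂ : ℤ) : ZMod n))}, ⟨⟨0, a₁, a₂, ha, by simp⟩, ⟨0, by simp [Prod.ext_iff]⟩, ⟨1, by simp⟩⟩, ?_⟩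
  rintro L ⟨⟨A, u, v, huv, rfl⟩, h0, h1⟩
  obtain ⟨k₀, hk₀⟩ := h0
  obtain ⟨k₁, hk₁⟩ := h1
  simp only [Prod.ext_iff, Prod.fst_zero, Prod.snd_zero] at hk₀ hk₁
  push_cast at hk₀ hk₁
  have e1 : (a₁ : ZMod m) = ((k₁ : ZMod m) - (k₀ : ZMod m)) * (u : ZMod m) := by
    linear_combination hk₁.1 - hk₀.1
  have e2 : (a₂ : ZMod n) = ((k₁ : ZMod n) - (k₀ : ZMod n)) * (v : ZMod n) := by
    linear_combination hk₁.2 - hk₀.2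
  set c : ℤ := k₁ - k₀ with hc
  have hco : IsCoprime c ((m : ℤ) * (n : ℤ)) := by
    rw [Int.isCoprime_iff_gcd_eq_one]
    by_contra hg
    obtain ⟨p, hp, hpd⟩ := Nat.exists_prime_and_dvd hg
    have hpc : (p : ℤ) ∣ c := (Int.natCast_dvd_natCast.mpr hpd).trans (Int.gcd_dvd_left _ _)
    have hpmn : p ∣ m * n := by
      have h2 := (Int.natCast_dvd_natCast.mpr hpd).trans
        (Int.gcd_dvd_right (a := c) (b := (m : ℤ) * n))
      exact_mod_cast h2
    have hpm : p ∣ m := by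
      rcases (Nat.Prime.dvd_mul hp).mp hpmn with h | h
      · exact h
      · exact (hpr p hp).mpr h
    have hpn : p ∣ n := (hpr p hp).mp hpm
    have d1 : (p : ℤ) ∣ a₁ := by
      have h0 : ((a₁ - c * u : ℤ) : ZMod m) = 0 := by
        push_cast [hc]; rw [e1]; ring
      have hmd : (m : ℤ) ∣ a₁ - c * u := (ZMod.intCast_zmod_eq_zero_iff_dvd _ _).mp h0
      have h3 : (p : ℤ) ∣ a₁ - c * u := dvd_trans (Int.natCast_dvd_natCast.mpr hpm) hmd
      have := dvd_add h3 (Dvd.dvd.mul_right hpc u)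
      simpa using this
    have d2 : (p : ℤ) ∣ a₂ := by
      have h0 : ((a₂ - c * v : ℤ) : ZMod n) = 0 := by
        push_cast [hc]; rw [e2]; ring
      have hnd : (n : ℤ) ∣ a₂ - c * v := (ZMod.intCast_zmod_eq_zero_iff_dvd _ _).mp h0
      have h3 : (p : ℤ) ∣ a₂ - c * v := dvd_trans (Int.natCast_dvd_natCast.mpr hpn) hnd
      have := dvd_add h3 (Dvd.dvd.mul_right hpc v)
      simpa using this
    have : p ∣ Int.gcd a₁ a₂ := Nat.dvd_gcd (Int.natCast_dvd.mp d1) (Int.natCast_dvd.mp d2)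
    rw [ha] at this
    exact hp.one_lt.ne' (Nat.dvd_one.mp this)
  obtain ⟨x, y, hxy⟩ := hco
  have hdm : ((k₁ : ZMod m) - (k₀ : ZMod m)) * (x : ZMod m) = 1 := by
    have h4 : ((x * c + y * ((m : ℤ) * n) : ℤ) : ZMod m) = 1 := by rw [hxy]; simp
    push_cast [hc] at h4
    rw [ZMod.natCast_self] at h4
    linear_combination h4
  have hdn : ((k₁ : ZMod n) - (k₀ : ZMod n)) * (x : ZMod n) = 1 := by
    have h4 : ((x * c + y * ((m : ℤ) * n) : ℤ) : ZMod n) = 1 := by rw [hxy]; simp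
    push_cast [hc] at h4
    rw [ZMod.natCast_self] at h4
    linear_combination h4
  ext P
  simp only [Set.mem_setOf_eq]
  constructor
  · rintro ⟨k, rfl⟩
    refine ⟨(k - k₀) * x, ?_⟩
    rw [Prod.ext_iff]
    constructor <;> push_cast
    · linear_combination -hk₀.1 - ((k : ZMod m) - k₀) * (x : ZMod m) * e1 +
        (-((k : ZMod m) - k₀)) * (u : ZMod m) * hdm
    · linear_combination -hk₀.2 - ((k : ZMod n) - k₀) * (x : ZMod n) * e2 +
        (-((k : ZMod n) - k₀)) * (v : ZMod n) * hdn
  · rintro ⟨j, rfl⟩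
    refine ⟨j * c + k₀, ?_⟩
    rw [Prod.ext_iff]
    constructor <;> push_cast [hc]
    · linear_combination (j : ZMod m) * e1 + hk₀.1
    · linear_combination (j : ZMod n) * e2 + hk₀.2
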